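/- For all real a > 0 and t > 0, ∫_0^t (1/√(π τ)) e^{-a²/(4τ)} dτ = 2√(t/π) e^{-a²/(4t)} - a · Erfc(a / (2√t)). -/

import Mathlib

open Real MeasureTheory Set Filter Topology

/-- Complementary error function Erfc(x) := (2/√π) ∫_x^∞ e^{-u²} du. -/
noncomputable def Erfc (x : ℝ) : ℝ :=
  (2 / Real.sqrt Real.pi) * ∫ u in Set.Ioi x, Real.exp (-u ^ 2)

namespace Stmt11Aux

lemma gauss_integrable : Integrable (fun u : ℝ => Real.exp (-u ^ 2)) := by
  simpa using integrable_exp_neg_mul_sq (one_pos)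

noncomputable def G (x : ℝ) : ℝ := ∫ u in Set.Ioi x, Real.exp (-u ^ 2)

lemma G_eq (x : ℝ) : G x = G 0 - ∫ u in (0:ℝ)..x, Real.exp (-u ^ 2) := by
  have h := intervalIntegral.integral_Iic_add_Ioi (b := x) (μ := volume)
    (f := fun u : ℝ => Real.exp (-u ^ 2)) gauss_integrable.integrableOn gauss_integrable.integrableOn
  have h0 := intervalIntegral.integral_Iic_add_Ioi (b := (0:ℝ)) (μ := volume)
    (f := fun u : ℝ => Real.exp (-u ^ 2)) gauss_integrable.integrableOn gauss_integrable.integrableOn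
  have hsub := intervalIntegral.integral_Iic_sub_Iic (a := (0:ℝ)) (b := x) (μ := volume)
    (f := fun u : ℝ => Real.exp (-u ^ 2)) gauss_integrable.integrableOn gauss_integrable.integrableOn
  unfold G
  linarith

lemma G_hasDerivAt (x : ℝ) : HasDerivAt G (-Real.exp (-x ^ 2)) x := by
  have hc : Continuous fun u : ℝ => Real.exp (-u ^ 2) := by continuity
  have h : HasDerivAt (fun y => ∫ u in (0:ℝ)..y, Real.exp (-u ^ 2)) (Real.exp (-x ^ 2)) x :=
    intervalIntegral.integral_hasDerivAt_right (hc.intervalIntegrable _ _)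
      (hc.stronglyMeasurableAtFilter _ _) hc.continuousAt
  have h2 := (hasDerivAt_const x (G 0)).sub h
  rw [show G = fun y => G 0 - ∫ u in (0:ℝ)..y, Real.exp (-u ^ 2) from funext G_eq]
  exact h2.congr_deriv (zero_sub _)

lemma G_tendsto : Tendsto G atTop (𝓝 0) := by
  have h : Tendsto (fun x => ∫ u in (0:ℝ)..x, Real.exp (-u ^ 2)) atTop (𝓝 (G 0)) :=
    MeasureTheory.intervalIntegral_tendsto_integral_Ioi 0 gauss_integrable.integrableOn tendsto_id
  have h2 := (tendsto_const_nhds (x := G 0) (f := atTop)).sub h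
  rw [show G = fun y => G 0 - ∫ u in (0:ℝ)..y, Real.exp (-u ^ 2) from funext G_eq]
  simpa using h2

lemma sqrt_exp_tendsto (a : ℝ) :
    Tendsto (fun τ : ℝ => Real.sqrt τ * Real.exp (-a ^ 2 / (4 * τ))) (𝓝[>] 0) (𝓝 0) := by
  have hs : Tendsto (fun τ : ℝ => Real.sqrt τ) (𝓝[>] (0:ℝ)) (𝓝 0) := by
    have := (Real.continuous_sqrt.tendsto 0).mono_left (nhdsWithin_le_nhds (s := Ioi (0:ℝ)))
    simpa using this
  refine squeeze_zero' ?_ ?_ hs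
  · filter_upwards [self_mem_nhdsWithin] with τ hτ
    positivity
  · filter_upwards [self_mem_nhdsWithin] with τ hτ
    have hτ0 : (0:ℝ) < τ := hτ
    have h1 : Real.exp (-a ^ 2 / (4 * τ)) ≤ 1 := by
      rw [Real.exp_le_one_iff]
      apply div_nonpos_of_nonpos_of_nonneg (neg_nonpos.2 (by positivity)) (by positivity)
    exact mul_le_of_le_one_right (Real.sqrt_nonneg τ) h1

lemma inner_tendsto (a : ℝ) (ha : 0 < a) :
    Tendsto (fun τ : ℝ => a / (2 * Real.sqrt τ)) (𝓝[>] 0) atTop := by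
  have h1 : Tendsto (fun τ : ℝ => 2 * Real.sqrt τ) (𝓝[>] (0:ℝ)) (𝓝[>] (0:ℝ)) := by
    apply tendsto_nhdsWithin_of_tendsto_nhds_of_eventually_within
    · have := ((Real.continuous_sqrt.tendsto 0).const_mul 2).mono_left
        (nhdsWithin_le_nhds (s := Ioi (0:ℝ)))
      simpa using this
    · filter_upwards [self_mem_nhdsWithin] with τ hτ
      have hτ0 : (0:ℝ) < τ := hτ
      exact Set.mem_Ioi.2 (by positivity)
  have h2 := tendsto_inv_nhdsGT_zero.comp h1
  have h3 := h2.const_mul_atTop ha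
  simpa [div_eq_mul_inv, Function.comp] using h3

lemma key_alg (a s E P : ℝ) (hs : s ≠ 0) (hP : P ≠ 0) :
    (1 / (P * s)) * E =
      (2 / P) * (1 / (2 * s) * E + s * (E * (-a ^ 2 / 4 * -(((s ^ 2) ^ 2)⁻¹))))
        - (2 * a / P) * (-E * ((0 * (2 * s) - a * (2 * (1 / (2 * s)))) / (2 * s) ^ 2)) := by
  field_simp
  ring

lemma F_deriv (a : ℝ) {τ : ℝ} (hτ : 0 < τ) :
    HasDerivAt (fun x : ℝ => (2 / Real.sqrt Real.pi) *
        (Real.sqrt x * Real.exp (-a ^ 2 / (4 * x)))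
      - (2 * a / Real.sqrt Real.pi) * G (a / (2 * Real.sqrt x)))
      ((1 / Real.sqrt (Real.pi * τ)) * Real.exp (-a ^ 2 / (4 * τ))) τ := by
  have hτ0 : τ ≠ 0 := hτ.ne'
  have hs : 0 < Real.sqrt τ := Real.sqrt_pos.2 hτ
  have hπ := Real.pi_pos
  have hsπ : 0 < Real.sqrt Real.pi := Real.sqrt_pos.2 hπ
  have hsqrt : HasDerivAt Real.sqrt (1 / (2 * Real.sqrt τ)) τ := Real.hasDerivAt_sqrt hτ0
  have hinv : HasDerivAt (fun x : ℝ => -a ^ 2 / (4 * x)) (-a ^ 2 / 4 * -(τ ^ 2)⁻¹) τ := by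
    have h := (hasDerivAt_inv hτ0).const_mul (-a ^ 2 / 4)
    have hfe : (fun x : ℝ => -a ^ 2 / (4 * x)) = fun x : ℝ => -a ^ 2 / 4 * x⁻¹ := by
      funext x
      simp [div_eq_mul_inv, mul_inv]
      ring
    rw [hfe]
    exact h
  have hexp : HasDerivAt (fun x : ℝ => Real.exp (-a ^ 2 / (4 * x)))
      (Real.exp (-a ^ 2 / (4 * τ)) * (-a ^ 2 / 4 * -(τ ^ 2)⁻¹)) τ := hinv.exp
  have h1 : HasDerivAt (fun x : ℝ => Real.sqrt x * Real.exp (-a ^ 2 / (4 * x)))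
      (1 / (2 * Real.sqrt τ) * Real.exp (-a ^ 2 / (4 * τ))
        + Real.sqrt τ * (Real.exp (-a ^ 2 / (4 * τ)) * (-a ^ 2 / 4 * -(τ ^ 2)⁻¹))) τ :=
    hsqrt.mul hexp
  have hx : HasDerivAt (fun x : ℝ => a / (2 * Real.sqrt x))
      ((0 * (2 * Real.sqrt τ) - a * (2 * (1 / (2 * Real.sqrt τ)))) / (2 * Real.sqrt τ) ^ 2) τ :=
    (hasDerivAt_const τ a).div (hsqrt.const_mul 2) (by positivity)
  have hG := (G_hasDerivAt (a / (2 * Real.sqrt τ))).comp τ hx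
  have hE' : -(a / (2 * Real.sqrt τ)) ^ 2 = -a ^ 2 / (4 * τ) := by
    rw [div_pow, mul_pow, Real.sq_sqrt hτ.le, neg_div]
    norm_num
  rw [hE'] at hG
  have hH := (h1.const_mul (2 / Real.sqrt Real.pi)).sub
    (hG.const_mul (2 * a / Real.sqrt Real.pi))
  have heq : (1 / Real.sqrt (Real.pi * τ)) * Real.exp (-a ^ 2 / (4 * τ)) =
      2 / Real.sqrt Real.pi * (1 / (2 * Real.sqrt τ) * Real.exp (-a ^ 2 / (4 * τ))
        + Real.sqrt τ * (Real.exp (-a ^ 2 / (4 * τ)) * (-a ^ 2 / 4 * -(τ ^ 2)⁻¹)))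
      - 2 * a / Real.sqrt Real.pi * (-Real.exp (-a ^ 2 / (4 * τ)) *
        ((0 * (2 * Real.sqrt τ) - a * (2 * (1 / (2 * Real.sqrt τ)))) / (2 * Real.sqrt τ) ^ 2)) := by
    rw [Real.sqrt_mul hπ.le]
    rw [show (τ ^ 2 : ℝ)⁻¹ = ((Real.sqrt τ ^ 2) ^ 2)⁻¹ by rw [Real.sq_sqrt hτ.le]]
    exact key_alg a (Real.sqrt τ) (Real.exp (-a ^ 2 / (4 * τ))) (Real.sqrt Real.pi) hs.ne' hsπ.ne'
  rw [heq]
  exact hH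

end Stmt11Aux

open Stmt11Aux in
/-- For a > 0 and t > 0,
∫_0^t (1/√(πτ)) e^{-a²/(4τ)} dτ = 2√(t/π) e^{-a²/(4t)} - a Erfc(a/(2√t)). -/
theorem stmt_11 (a t : ℝ) (ha : 0 < a) (ht : 0 < t) :
    ∫ τ in (0 : ℝ)..t,
        (1 / Real.sqrt (Real.pi * τ)) * Real.exp (-a ^ 2 / (4 * τ))
      = 2 * Real.sqrt (t / Real.pi) * Real.exp (-a ^ 2 / (4 * t))
        - a * Erfc (a / (2 * Real.sqrt t)) := by
  have hπ := Real.pi_pos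
  have hsπ : 0 < Real.sqrt Real.pi := Real.sqrt_pos.2 hπ
  set F : ℝ → ℝ := fun τ => if τ ≤ 0 then 0 else
    (2 / Real.sqrt Real.pi) * (Real.sqrt τ * Real.exp (-a ^ 2 / (4 * τ)))
      - (2 * a / Real.sqrt Real.pi) * G (a / (2 * Real.sqrt τ)) with hFdef
  have hFpos : ∀ τ : ℝ, 0 < τ → F τ =
      (2 / Real.sqrt Real.pi) * (Real.sqrt τ * Real.exp (-a ^ 2 / (4 * τ)))
        - (2 * a / Real.sqrt Real.pi) * G (a / (2 * Real.sqrt τ)) := by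
    intro τ h
    simp only [hFdef]
    rw [if_neg (not_le.2 h)]
  have hF0 : F 0 = 0 := by simp [hFdef]
  have hderiv : ∀ τ : ℝ, 0 < τ →
      HasDerivAt F ((1 / Real.sqrt (Real.pi * τ)) * Real.exp (-a ^ 2 / (4 * τ))) τ := by
    intro τ hτ
    apply (F_deriv a hτ).congr_of_eventuallyEq
    filter_upwards [eventually_gt_nhds hτ] with x hx
    exact hFpos x hx
  have hsub : Icc (0:ℝ) t ⊆ insert 0 (Ioi 0) := by
    intro y hy
    rcases eq_or_lt_of_le hy.1 with h | h
    · exact Or.inl h.symm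
    · exact Or.inr h
  have hFc : ContinuousOn F (Icc 0 t) := by
    intro x hx
    rcases eq_or_lt_of_le hx.1 with h0 | h0
    · rw [← h0, ContinuousWithinAt, hF0]
      have hIoi : Tendsto F (𝓝[>] (0:ℝ)) (𝓝 0) := by
        have hA := sqrt_exp_tendsto a
        have hB := G_tendsto.comp (inner_tendsto a ha)
        have hAB := (hA.const_mul (2 / Real.sqrt Real.pi)).sub
          (hB.const_mul (2 * a / Real.sqrt Real.pi))
        simp only [mul_zero, sub_zero] at hAB
        apply hAB.congr'
        filter_upwards [self_mem_nhdsWithin] with τ hτ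
        exact (hFpos τ hτ).symm
      refine Tendsto.mono_left ?_ (nhdsWithin_mono 0 hsub)
      rw [nhdsWithin_insert]
      refine Tendsto.sup ?_ hIoi
      simpa [hF0] using tendsto_pure_nhds F 0
    · exact (hderiv x h0).continuousAt.continuousWithinAt
  have hgc : ContinuousOn
      (fun τ : ℝ => (1 / Real.sqrt (Real.pi * τ)) * Real.exp (-a ^ 2 / (4 * τ))) (Icc 0 t) := by
    intro x hx
    rcases eq_or_lt_of_le hx.1 with h0 | h0
    · have hg0 : (1 / Real.sqrt (Real.pi * (0:ℝ))) * Real.exp (-a ^ 2 / (4 * (0:ℝ))) = 0 := by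
        simp
      rw [← h0, ContinuousWithinAt, hg0]
      have hIoi : Tendsto
          (fun τ : ℝ => (1 / Real.sqrt (Real.pi * τ)) * Real.exp (-a ^ 2 / (4 * τ)))
          (𝓝[>] (0:ℝ)) (𝓝 0) := by
        have hc : Tendsto (fun τ : ℝ => (4 / (a ^ 2 * Real.sqrt Real.pi)) * Real.sqrt τ)
            (𝓝[>] (0:ℝ)) (𝓝 0) := by
          have := ((Real.continuous_sqrt.tendsto 0).const_mul
            (4 / (a ^ 2 * Real.sqrt Real.pi))).mono_left (nhdsWithin_le_nhds (s := Ioi (0:ℝ)))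
          simpa using this
        refine squeeze_zero' ?_ ?_ hc
        · filter_upwards [self_mem_nhdsWithin] with τ hτ
          have hτ0 : (0:ℝ) < τ := hτ
          positivity
        · filter_upwards [self_mem_nhdsWithin] with τ hτ
          have hτ0 : (0:ℝ) < τ := hτ
          have hsτ : 0 < Real.sqrt τ := Real.sqrt_pos.2 hτ0
          have hexp : Real.exp (-a ^ 2 / (4 * τ)) ≤ 4 * τ / a ^ 2 := by
            have hy : (0:ℝ) < a ^ 2 / (4 * τ) := by positivity
            have h1 : a ^ 2 / (4 * τ) ≤ Real.exp (a ^ 2 / (4 * τ)) := by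
              have := Real.add_one_le_exp (a ^ 2 / (4 * τ))
              linarith
            have h2 : Real.exp (-a ^ 2 / (4 * τ)) = (Real.exp (a ^ 2 / (4 * τ)))⁻¹ := by
              rw [neg_div, Real.exp_neg]
            rw [h2]
            calc (Real.exp (a ^ 2 / (4 * τ)))⁻¹ ≤ (a ^ 2 / (4 * τ))⁻¹ :=
                  inv_anti₀ hy h1
              _ = 4 * τ / a ^ 2 := by rw [inv_div]
          calc (1 / Real.sqrt (Real.pi * τ)) * Real.exp (-a ^ 2 / (4 * τ))
              ≤ (1 / Real.sqrt (Real.pi * τ)) * (4 * τ / a ^ 2) :=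
                mul_le_mul_of_nonneg_left hexp (by positivity)
            _ = (4 / (a ^ 2 * Real.sqrt Real.pi)) * (τ / Real.sqrt τ) := by
                rw [Real.sqrt_mul hπ.le]
                ring
            _ = (4 / (a ^ 2 * Real.sqrt Real.pi)) * Real.sqrt τ := by rw [Real.div_sqrt]
      refine Tendsto.mono_left ?_ (nhdsWithin_mono 0 hsub)
      rw [nhdsWithin_insert]
      refine Tendsto.sup ?_ hIoi
      simpa [hg0] using tendsto_pure_nhds
        (fun τ : ℝ => (1 / Real.sqrt (Real.pi * τ)) * Real.exp (-a ^ 2 / (4 * τ))) 0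
    · apply ContinuousAt.continuousWithinAt
      have h1 : (0:ℝ) < Real.pi * x := by positivity
      apply ContinuousAt.mul
      · apply ContinuousAt.div continuousAt_const
        · exact Real.continuous_sqrt.continuousAt.comp
            (continuousAt_const.mul continuousAt_id)
        · exact (Real.sqrt_pos.2 h1).ne'
      · exact Real.continuous_exp.continuousAt.comp
          (ContinuousAt.div continuousAt_const (continuousAt_const.mul continuousAt_id)
            (by positivity))
  have hint : IntervalIntegrable
      (fun τ : ℝ => (1 / Real.sqrt (Real.pi * τ)) * Real.exp (-a ^ 2 / (4 * τ))) volume 0 t := by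
    apply ContinuousOn.intervalIntegrable
    rwa [uIcc_of_le ht.le]
  have hFTC := intervalIntegral.integral_eq_sub_of_hasDeriv_right_of_le ht.le hFc
    (fun x hx => (hderiv x hx.1).hasDerivWithinAt) hint
  rw [hFTC, hF0, sub_zero, hFpos t ht]
  unfold G
  simp only [Erfc]
  rw [Real.sqrt_div ht.le]
  ring
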